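/- Let α ∈ (0,∞) with α ≠ 1 and let t ∈ (0, t_α). Then h_α(p(·,t)) ≥ h_α(G_t) = (1/2)·log(2πt) + (1/(2(α−1)))·log α, where G_t is a centered Gaussian random variable with variance t; that is, ∫ p(x,t)^α dx ≤ ∫ φ_t(x)^α dx when α > 1 and ∫ p(x,t)^α dx ≥ ∫ φ_t(x)^α dx when 0 < α < 1, where φ_t(x) = (2πt)^{-1/2} exp(−x²/(2t)). -/

import Mathlib

open MeasureTheory Real Filter
open scoped Classical ENNReal

/-- The density `p(x,t)` of `X + √t Z` along the heat flow. -/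
noncomputable def heatP (f : ℝ → ℝ) (t x : ℝ) : ℝ :=
  ∫ y : ℝ, f y * ((Real.sqrt (2 * Real.pi * t))⁻¹ * Real.exp (-(x - y) ^ 2 / (2 * t)))

/-- `p_k(x,t) = ∂^k p / ∂x^k`. -/
noncomputable def pk (f : ℝ → ℝ) (k : ℕ) (t x : ℝ) : ℝ :=
  iteratedDeriv k (heatP f t) x

/-- `p̄_i = p_i / p`. -/
noncomputable def pbar (f : ℝ → ℝ) (i : ℕ) (t x : ℝ) : ℝ :=
  pk f i t x / heatP f t x

/-- The Rényi entropy `h_α(p(·,t))`, with the Shannon entropy at `α = 1`. -/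
noncomputable def renyiEnt (f : ℝ → ℝ) (α t : ℝ) : ℝ :=
  if α = 1 then -∫ x : ℝ, heatP f t x * Real.log (heatP f t x)
  else (1 - α)⁻¹ * Real.log (∫ x : ℝ, heatP f t x ^ α)

/-- Finiteness `|h_α(p(·,t))| < ∞` of the Rényi entropy at time `t`. -/
def renyiFinite (f : ℝ → ℝ) (α t : ℝ) : Prop :=
  if α = 1 then Integrable (fun x : ℝ => heatP f t x * Real.log (heatP f t x))
  else Integrable (fun x : ℝ => heatP f t x ^ α) ∧ 0 < ∫ x : ℝ, heatP f t x ^ α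

/-- `t < t_α` where `t_α = sup { s > 0 : |h_α(p(·,s))| < ∞ }`. -/
def ltTalpha (f : ℝ → ℝ) (α t : ℝ) : Prop :=
  ∃ s : ℝ, t < s ∧ 0 < s ∧ renyiFinite f α s

/-- The tilted expectation `E_α[g] = (∫ g p^α) / (∫ p^α)`. -/
noncomputable def Ea (f : ℝ → ℝ) (α t : ℝ) (g : ℝ → ℝ) : ℝ :=
  (∫ x : ℝ, g x * heatP f t x ^ α) / (∫ x : ℝ, heatP f t x ^ α)

/-- The centered Gaussian density with variance t. -/
noncomputable def gaussDen (t x : ℝ) : ℝ :=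
  (Real.sqrt (2 * Real.pi * t))⁻¹ * Real.exp (-x ^ 2 / (2 * t))


/- ### Auxiliary lemmas ### -/

lemma gaussDen_pos {t : ℝ} (ht : 0 < t) (x : ℝ) : 0 < gaussDen t x := by
  have : 0 < 2 * Real.pi * t := by positivity
  exact mul_pos (inv_pos.2 (Real.sqrt_pos.2 this)) (Real.exp_pos _)

lemma gaussDen_le {t : ℝ} (ht : 0 < t) (x : ℝ) :
    gaussDen t x ≤ (Real.sqrt (2 * Real.pi * t))⁻¹ := by
  have h : Real.exp (-x ^ 2 / (2 * t)) ≤ 1 :=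
    Real.exp_le_one_iff.2 (div_nonpos_of_nonpos_of_nonneg (by nlinarith [sq_nonneg x]) (by linarith))
  calc gaussDen t x ≤ (Real.sqrt (2 * Real.pi * t))⁻¹ * 1 := by
        unfold gaussDen
        exact mul_le_mul_of_nonneg_left h (by positivity)
    _ = _ := mul_one _

lemma gaussDen_measurable (t : ℝ) : Measurable (gaussDen t) := by
  unfold gaussDen; fun_prop

lemma exp_gauss_eq (t : ℝ) (ht : 0 < t) (x : ℝ) :
    Real.exp (-x ^ 2 / (2 * t)) = Real.exp (-(2*t)⁻¹ * x ^ 2) := by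
  congr 1; field_simp

lemma integral_gaussDen {t : ℝ} (ht : 0 < t) : ∫ x : ℝ, gaussDen t x = 1 := by
  unfold gaussDen
  rw [integral_const_mul]
  simp_rw [exp_gauss_eq t ht, integral_gaussian]
  rw [← Real.sqrt_inv, ← Real.sqrt_mul (by positivity)]
  rw [show (2 * Real.pi * t)⁻¹ * (Real.pi / (2 * t)⁻¹) = 1 by field_simp]
  exact Real.sqrt_one

lemma integral_gaussDen_rpow {t α : ℝ} (ht : 0 < t) (hα : 0 < α) :
    ∫ x : ℝ, gaussDen t x ^ α = (Real.sqrt (2 * Real.pi * t)) ^ (1 - α) / Real.sqrt α := by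
  have hc : 0 < Real.sqrt (2 * Real.pi * t) := Real.sqrt_pos.2 (by positivity)
  have key : ∀ x : ℝ, gaussDen t x ^ α
      = (Real.sqrt (2 * Real.pi * t))⁻¹ ^ α * Real.exp (-(α/(2*t)) * x ^ 2) := by
    intro x
    unfold gaussDen
    rw [Real.mul_rpow (by positivity) (Real.exp_pos _).le, ← Real.exp_mul]
    ring_nf
  simp_rw [key]
  rw [integral_const_mul, integral_gaussian]
  rw [← Real.rpow_neg_one, ← Real.rpow_mul hc.le, neg_one_mul, Real.rpow_neg hc.le,
    show Real.pi / (α / (2 * t)) = 2 * Real.pi * t / α by field_simp,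
    Real.sqrt_div (by positivity) α, Real.rpow_sub hc, Real.rpow_one]
  have h1 : Real.sqrt (2 * Real.pi * t) ^ α ≠ 0 := by positivity
  have h2 : Real.sqrt α ≠ 0 := by positivity
  field_simp

lemma integrable_gaussDen_rpow {t α : ℝ} (ht : 0 < t) (hα : 0 < α) :
    Integrable (fun x : ℝ => gaussDen t x ^ α) := by
  have key : ∀ x : ℝ, gaussDen t x ^ α
      = (Real.sqrt (2 * Real.pi * t))⁻¹ ^ α * Real.exp (-(α/(2*t)) * x ^ 2) := by
    intro x
    unfold gaussDen
    rw [Real.mul_rpow (by positivity) (Real.exp_pos _).le, ← Real.exp_mul]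
    ring_nf
  simp_rw [key]
  exact (integrable_exp_neg_mul_sq (by positivity)).const_mul _

lemma gaussDen_conv {t u : ℝ} (ht : 0 < t) (hu : 0 < u) (a : ℝ) :
    ∫ y : ℝ, gaussDen t (a - y) * gaussDen u y = gaussDen (t + u) a := by
  set b : ℝ := (t + u) / (2 * t * u) with hb
  set m : ℝ := u * a / (t + u) with hm
  have hbpos : 0 < b := by positivity
  have htu : 0 < t + u := by linarith
  have e1 : ∀ y : ℝ, Real.exp (-(a - y) ^ 2 / (2 * t)) * Real.exp (-y ^ 2 / (2 * u))
      = Real.exp (-a ^ 2 / (2 * (t + u))) * Real.exp (-b * (y - m) ^ 2) := by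
    intro y
    rw [← Real.exp_add, ← Real.exp_add]
    congr 1
    rw [hb, hm]
    field_simp
    ring
  have hconst : (Real.sqrt (2 * Real.pi * t) * Real.sqrt (2 * Real.pi * u))⁻¹
      * Real.sqrt (Real.pi / b) = (Real.sqrt (2 * Real.pi * (t + u)))⁻¹ := by
    rw [← Real.sqrt_mul (by positivity), ← Real.sqrt_inv, ← Real.sqrt_mul (by positivity)]
    rw [hb]
    field_simp
    ring
    rw [← Real.sqrt_mul (by positivity), inv_mul_cancel₀ (by positivity), Real.sqrt_one]
  have key : ∀ y : ℝ, gaussDen t (a - y) * gaussDen u y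
      = ((Real.sqrt (2 * Real.pi * t) * Real.sqrt (2 * Real.pi * u))⁻¹
          * Real.exp (-a ^ 2 / (2 * (t + u)))) * Real.exp (-b * (y - m) ^ 2) := by
    intro y
    unfold gaussDen
    calc (Real.sqrt (2 * Real.pi * t))⁻¹ * Real.exp (-(a - y) ^ 2 / (2 * t))
          * ((Real.sqrt (2 * Real.pi * u))⁻¹ * Real.exp (-y ^ 2 / (2 * u)))
        = (Real.sqrt (2 * Real.pi * t) * Real.sqrt (2 * Real.pi * u))⁻¹
          * (Real.exp (-(a - y) ^ 2 / (2 * t)) * Real.exp (-y ^ 2 / (2 * u))) := by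
          rw [mul_inv]; ring
      _ = _ := by rw [e1 y]; ring
  simp_rw [key]
  rw [integral_const_mul,
    show (fun y : ℝ => Real.exp (-b * (y - m) ^ 2))
      = (fun y : ℝ => (fun z : ℝ => Real.exp (-b * z ^ 2)) (y - m)) from rfl,
    integral_sub_right_eq_self (fun z : ℝ => Real.exp (-b * z ^ 2)) m,
    integral_gaussian]
  unfold gaussDen
  rw [← hconst]
  ring

section
variable {f : ℝ → ℝ} {t : ℝ}

lemma heatP_eq (f : ℝ → ℝ) (t x : ℝ) :
    heatP f t x = ∫ y : ℝ, f y * gaussDen t (x - y) := rfl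

lemma integrable_gaussDen (ht : 0 < t) : Integrable (gaussDen t) := by
  unfold gaussDen
  simp_rw [exp_gauss_eq t ht]
  exact (integrable_exp_neg_mul_sq (by positivity)).const_mul _

lemma integrable_heatP_integrand (hfi : Integrable f) (ht : 0 < t) (x : ℝ) :
    Integrable (fun y : ℝ => f y * gaussDen t (x - y)) := by
  have hb : Integrable (fun y : ℝ => gaussDen t (x - y) * f y) :=
    hfi.bdd_mul (c := (Real.sqrt (2 * Real.pi * t))⁻¹)
      ((gaussDen_measurable t).comp (measurable_const.sub measurable_id)).aestronglyMeasurable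
      (Filter.Eventually.of_forall fun y => by
        rw [Real.norm_eq_abs, abs_of_pos (gaussDen_pos ht _)]; exact gaussDen_le ht _)
  exact hb.congr (Filter.Eventually.of_forall fun y => mul_comm _ _)

lemma heatP_pos (hfm : Measurable f) (hf0 : ∀ x, 0 ≤ f x) (hfi : Integrable f)
    (hf1 : (∫ x : ℝ, f x) = 1) (ht : 0 < t) (x : ℝ) : 0 < heatP f t x := by
  rw [heatP_eq]
  rw [integral_pos_iff_support_of_nonneg
    (fun y => mul_nonneg (hf0 y) (gaussDen_pos ht _).le)
    (integrable_heatP_integrand hfi ht x)]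
  have hsupp : Function.support (fun y : ℝ => f y * gaussDen t (x - y)) = Function.support f := by
    ext y
    simp [Function.mem_support, mul_eq_zero, (gaussDen_pos ht (x - y)).ne']
  rw [hsupp]
  by_contra h
  push_neg at h
  have hz : volume (Function.support f) = 0 := le_antisymm h zero_le
  have h0 : f =ᵐ[volume] (fun _ => (0:ℝ)) := by
    rw [Filter.EventuallyEq, ae_iff]
    simpa [Function.support] using hz
  rw [integral_congr_ae h0] at hf1
  simp at hf1

end

section
variable {f : ℝ → ℝ} {t : ℝ}

lemma heatP_le (hf0 : ∀ x, 0 ≤ f x) (hfi : Integrable f)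
    (hf1 : (∫ x : ℝ, f x) = 1) (ht : 0 < t) (x : ℝ) :
    heatP f t x ≤ (Real.sqrt (2 * Real.pi * t))⁻¹ := by
  rw [heatP_eq]
  calc ∫ y : ℝ, f y * gaussDen t (x - y)
      ≤ ∫ y : ℝ, f y * (Real.sqrt (2 * Real.pi * t))⁻¹ := by
        refine integral_mono (integrable_heatP_integrand hfi ht x) (hfi.mul_const _) ?_
        exact fun y => mul_le_mul_of_nonneg_left (gaussDen_le ht _) (hf0 y)
    _ = (Real.sqrt (2 * Real.pi * t))⁻¹ := by rw [integral_mul_const, hf1, one_mul]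

lemma heatP_measurable (hfm : Measurable f) (t : ℝ) : Measurable (heatP f t) := by
  have h : StronglyMeasurable fun p : ℝ × ℝ =>
      f p.2 * ((Real.sqrt (2 * Real.pi * t))⁻¹ * Real.exp (-(p.1 - p.2) ^ 2 / (2 * t))) := by
    apply Measurable.stronglyMeasurable
    fun_prop
  exact h.integral_prod_right'.measurable

lemma heatP_lintegral (hfm : Measurable f) (hf0 : ∀ x, 0 ≤ f x) (hfi : Integrable f)
    (ht : 0 < t) (x : ℝ) :
    ENNReal.ofReal (heatP f t x)
      = ∫⁻ y : ℝ, ENNReal.ofReal (f y) * ENNReal.ofReal (gaussDen t (x - y)) := by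
  rw [heatP_eq, ofReal_integral_eq_lintegral_ofReal (integrable_heatP_integrand hfi ht x)
    (Filter.Eventually.of_forall fun y => mul_nonneg (hf0 y) (gaussDen_pos ht _).le)]
  exact lintegral_congr fun y => ENNReal.ofReal_mul (hf0 y)

lemma lintegral_ofReal_f (hf0 : ∀ x, 0 ≤ f x) (hfi : Integrable f)
    (hf1 : (∫ x : ℝ, f x) = 1) :
    ∫⁻ y : ℝ, ENNReal.ofReal (f y) = 1 := by
  rw [← ofReal_integral_eq_lintegral_ofReal hfi (Filter.Eventually.of_forall hf0), hf1,
    ENNReal.ofReal_one]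

lemma lintegral_ofReal_gaussDen (ht : 0 < t) :
    ∫⁻ y : ℝ, ENNReal.ofReal (gaussDen t y) = 1 := by
  rw [← ofReal_integral_eq_lintegral_ofReal (integrable_gaussDen ht)
    (Filter.Eventually.of_forall fun y => (gaussDen_pos ht y).le), integral_gaussDen ht,
    ENNReal.ofReal_one]

end

lemma my_conj {α : ℝ} (hα0 : 0 < α) (hα1 : α < 1) :
    (1/α).HolderConjugate (1/(1-α)) := by
  rw [Real.holderConjugate_iff]
  constructor
  · rw [one_div]
    exact (one_lt_inv₀ hα0).mpr hα1
  · simp only [one_div, inv_inv]; ring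

lemma jensen_rpow {α : ℝ} (hα0 : 0 < α) (hα1 : α < 1) {F G : ℝ → ℝ≥0∞}
    (hF : AEMeasurable F (volume : Measure ℝ)) (hG : AEMeasurable G (volume : Measure ℝ))
    (hF1 : ∫⁻ y, F y = 1) :
    ∫⁻ y, F y * G y ^ α ≤ (∫⁻ y, F y * G y) ^ α := by
  have h1α : (0:ℝ) < 1 - α := by linarith
  have key : (fun y => F y * G y ^ α)
      = (fun y => (F y * G y) ^ α) * fun y => F y ^ (1-α) := by
    funext y
    simp only [Pi.mul_apply]
    rw [ENNReal.mul_rpow_of_nonneg _ _ hα0.le, mul_assoc, mul_comm (G y ^ α), ← mul_assoc,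
      ← ENNReal.rpow_add_of_nonneg _ _ hα0.le h1α.le, show α + (1 - α) = 1 by ring,
      ENNReal.rpow_one]
  have hold := ENNReal.lintegral_mul_le_Lp_mul_Lq (volume : Measure ℝ) (my_conj hα0 hα1)
    ((hF.mul hG).pow_const α) (hF.pow_const (1-α))
  simp only [Pi.mul_apply] at hold
  have e1 : ∀ y : ℝ, ((F y * G y) ^ α) ^ (1/α) = F y * G y := by
    intro y
    rw [← ENNReal.rpow_mul, mul_one_div, div_self hα0.ne', ENNReal.rpow_one]
  have e2 : ∀ y : ℝ, (F y ^ (1-α)) ^ (1/(1-α)) = F y := by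
    intro y
    rw [← ENNReal.rpow_mul, mul_one_div, div_self h1α.ne', ENNReal.rpow_one]
  simp_rw [e1, e2, hF1] at hold
  rw [one_div_one_div, one_div_one_div, ENNReal.one_rpow, mul_one] at hold
  calc ∫⁻ y, F y * G y ^ α = ∫⁻ y, ((fun y => (F y * G y) ^ α) * fun y => F y ^ (1-α)) y := by
        rw [← key]
    _ ≤ (∫⁻ y, F y * G y) ^ α := by simpa using hold

section core
variable {F Φ : ℝ → ℝ≥0∞} {α : ℝ}

lemma conv_kernel_meas (hF : Measurable F) (hΦ : Measurable Φ) :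
    Measurable fun p : ℝ × ℝ => F p.2 * Φ (p.1 - p.2) :=
  (hF.comp measurable_snd).mul (hΦ.comp (measurable_fst.sub measurable_snd))

lemma convP_meas (hF : Measurable F) (hΦ : Measurable Φ) :
    Measurable fun x : ℝ => ∫⁻ y, F y * Φ (x - y) :=
  Measurable.lintegral_prod_right' (conv_kernel_meas hF hΦ)

lemma conv_mass (hF : Measurable F) (hΦ : Measurable Φ)
    (hF1 : ∫⁻ y, F y = 1) (hΦ1 : ∫⁻ z, Φ z = 1) :
    ∫⁻ x, ∫⁻ y, F y * Φ (x - y) = 1 := by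
  rw [lintegral_lintegral_swap (conv_kernel_meas hF hΦ).aemeasurable]
  calc ∫⁻ y, ∫⁻ x, F y * Φ (x - y)
      = ∫⁻ y, F y * ∫⁻ x, Φ (x - y) := by
        refine lintegral_congr fun y => ?_
        have hm : Measurable fun x : ℝ => Φ (x - y) := by
          exact hΦ.comp (measurable_id.sub measurable_const)
        rw [lintegral_const_mul _ hm]
    _ = ∫⁻ y, F y * 1 := by
        refine lintegral_congr fun y => ?_
        rw [lintegral_sub_right_eq_self Φ y, hΦ1]
    _ = 1 := by simp [hF1]

lemma conv_rpow_lower (hα0 : 0 < α) (hα1 : α < 1)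
    (hF : Measurable F) (hΦ : Measurable Φ) (hF1 : ∫⁻ y, F y = 1) :
    ∫⁻ z, Φ z ^ α ≤ ∫⁻ x, (∫⁻ y, F y * Φ (x - y)) ^ α := by
  have step1 : ∫⁻ x, ∫⁻ y, F y * Φ (x - y) ^ α ≤ ∫⁻ x, (∫⁻ y, F y * Φ (x - y)) ^ α := by
    refine lintegral_mono fun x => ?_
    exact jensen_rpow hα0 hα1 hF.aemeasurable
      ((hΦ.comp (measurable_const.sub measurable_id)).aemeasurable) hF1
  refine le_trans (le_of_eq ?_) step1
  rw [lintegral_lintegral_swap ((hF.comp measurable_snd).mul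
    ((hΦ.comp (measurable_fst.sub measurable_snd)).pow_const α)).aemeasurable]
  calc ∫⁻ z, Φ z ^ α
      = ∫⁻ y, F y * ∫⁻ z, Φ z ^ α := by
        rw [lintegral_mul_const'' _ hF.aemeasurable, hF1, one_mul]
    _ = ∫⁻ y, ∫⁻ x, F y * Φ (x - y) ^ α := by
        refine lintegral_congr fun y => ?_
        have hm : Measurable fun x : ℝ => Φ (x - y) ^ α := by
          exact (hΦ.comp (measurable_id.sub measurable_const)).pow_const α
        rw [lintegral_const_mul _ hm, lintegral_sub_right_eq_self (fun z => Φ z ^ α) y]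
end core

section mink
variable {F Φ : ℝ → ℝ≥0∞} {α : ℝ}

lemma rpow_split (hαm1 : (0:ℝ) ≤ α - 1) (z : ℝ≥0∞) : z ^ α = z * z ^ (α - 1) := by
  calc z ^ α = z ^ (1 + (α - 1)) := by ring_nf
    _ = z ^ (1:ℝ) * z ^ (α - 1) := ENNReal.rpow_add_of_nonneg _ _ zero_le_one hαm1
    _ = z * z ^ (α - 1) := by rw [ENNReal.rpow_one]

lemma conv_rpow_upper (hα : 1 < α)
    (hF : Measurable F) (hΦ : Measurable Φ) (hF1 : ∫⁻ y, F y = 1)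
    (hfin : (∫⁻ x, (∫⁻ y, F y * Φ (x - y)) ^ α) ≠ ∞) :
    ∫⁻ x, (∫⁻ y, F y * Φ (x - y)) ^ α ≤ ∫⁻ z, Φ z ^ α := by
  set P : ℝ → ℝ≥0∞ := fun x => ∫⁻ y, F y * Φ (x - y) with hP
  set M : ℝ≥0∞ := ∫⁻ x, P x ^ α with hM
  set A : ℝ≥0∞ := ∫⁻ z, Φ z ^ α with hA
  have hα0 : (0:ℝ) < α := by linarith
  have hαm1 : (0:ℝ) < α - 1 := by linarith
  have hPm : Measurable P := convP_meas hF hΦ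
  set q : ℝ := α / (α - 1) with hq
  have hconj : α.HolderConjugate q := Real.HolderConjugate.conjExponent hα
  have hq0 : (0:ℝ) < q := hconj.symm.pos
  have step1 : M = ∫⁻ y, F y * ∫⁻ x, Φ (x - y) * P x ^ (α - 1) := by
    have e1 : ∀ x, P x ^ α = ∫⁻ y, F y * Φ (x - y) * P x ^ (α - 1) := by
      intro x
      have hm : Measurable fun y : ℝ => F y * Φ (x - y) :=
        hF.mul (hΦ.comp (measurable_const.sub measurable_id))
      rw [lintegral_mul_const'' _ hm.aemeasurable]
      exact rpow_split hαm1.le (P x)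
    calc M = ∫⁻ x, ∫⁻ y, F y * Φ (x - y) * P x ^ (α - 1) := lintegral_congr e1
      _ = ∫⁻ y, ∫⁻ x, F y * Φ (x - y) * P x ^ (α - 1) := by
          refine lintegral_lintegral_swap ?_
          exact ((conv_kernel_meas hF hΦ).mul
            ((hPm.pow_const (α - 1)).comp measurable_fst)).aemeasurable
      _ = ∫⁻ y, F y * ∫⁻ x, Φ (x - y) * P x ^ (α - 1) := by
          refine lintegral_congr fun y => ?_
          simp_rw [mul_assoc]
          have hm : Measurable fun x : ℝ => Φ (x - y) * P x ^ (α - 1) :=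
            (hΦ.comp (measurable_id.sub measurable_const)).mul (hPm.pow_const (α - 1))
          rw [lintegral_const_mul _ hm]
  have step2 : ∀ y : ℝ, ∫⁻ x, Φ (x - y) * P x ^ (α - 1) ≤ A ^ (1/α) * M ^ (1/q) := by
    intro y
    have hΦym : Measurable fun x : ℝ => Φ (x - y) :=
      hΦ.comp (measurable_id.sub measurable_const)
    have h := ENNReal.lintegral_mul_le_Lp_mul_Lq (volume : Measure ℝ) hconj
      hΦym.aemeasurable ((hPm.pow_const (α - 1)).aemeasurable)
    simp only [Pi.mul_apply] at h
    have e2 : ∫⁻ x, Φ (x - y) ^ α = A := lintegral_sub_right_eq_self (fun z => Φ z ^ α) y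
    have e3 : ∀ x : ℝ, (P x ^ (α - 1)) ^ q = P x ^ α := by
      intro x
      rw [← ENNReal.rpow_mul, hq]
      congr 1
      field_simp
    simp_rw [e2, e3] at h
    rw [← hM] at h
    exact h
  have step3 : M ≤ A ^ (1/α) * M ^ (1/q) := by
    calc M = ∫⁻ y, F y * ∫⁻ x, Φ (x - y) * P x ^ (α - 1) := step1
      _ ≤ ∫⁻ y, F y * (A ^ (1/α) * M ^ (1/q)) :=
          lintegral_mono fun y => mul_le_mul_right (step2 y) _
      _ = A ^ (1/α) * M ^ (1/q) := by
          rw [lintegral_mul_const'' _ hF.aemeasurable, hF1, one_mul]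
  by_cases hM0 : M = 0
  · exact le_of_eq_of_le hM0 zero_le
  have hMfin : M ≠ ∞ := hfin
  have hMq0 : M ^ (1/q) ≠ 0 := by
    simp [ENNReal.rpow_eq_zero_iff, hM0, hMfin, hq0, hq0.not_gt]
  have hMqt : M ^ (1/q) ≠ ∞ := by
    simp [ENNReal.rpow_eq_top_iff, hM0, hMfin, hq0, hq0.not_gt]
  have hsplit : M = M ^ (1/α) * M ^ (1/q) := by
    rw [← ENNReal.rpow_add _ _ hM0 hMfin, one_div, one_div, hconj.inv_add_inv_eq_one,
      ENNReal.rpow_one]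
  have hle : M ^ (1/α) ≤ A ^ (1/α) := by
    have h2 : M ^ (1/α) * M ^ (1/q) ≤ A ^ (1/α) * M ^ (1/q) :=
      le_trans (le_of_eq hsplit.symm) step3
    exact (ENNReal.mul_le_mul_iff_left hMq0 hMqt).1 h2
  calc M = (M ^ (1/α)) ^ α := by
        rw [← ENNReal.rpow_mul, one_div, inv_mul_cancel₀ hα0.ne', ENNReal.rpow_one]
    _ ≤ (A ^ (1/α)) ^ α := ENNReal.rpow_le_rpow hle hα0.le
    _ = A := by rw [← ENNReal.rpow_mul, one_div, inv_mul_cancel₀ hα0.ne', ENNReal.rpow_one]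
end mink


section semigroup
variable {f : ℝ → ℝ} {t u : ℝ}

lemma ofReal_gaussDen_conv (ht : 0 < t) (hu : 0 < u) (a : ℝ) :
    ENNReal.ofReal (gaussDen (t + u) a)
      = ∫⁻ w : ℝ, ENNReal.ofReal (gaussDen t (a - w)) * ENNReal.ofReal (gaussDen u w) := by
  have hint : Integrable (fun w : ℝ => gaussDen t (a - w) * gaussDen u w) :=
    (integrable_gaussDen hu).bdd_mul
      (c := (Real.sqrt (2 * Real.pi * t))⁻¹)
      ((gaussDen_measurable t).comp (measurable_const.sub measurable_id)).aestronglyMeasurable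
      (Filter.Eventually.of_forall fun w => by
        rw [Real.norm_eq_abs, abs_of_pos (gaussDen_pos ht _)]; exact gaussDen_le ht _)
  rw [← gaussDen_conv ht hu a,
    ofReal_integral_eq_lintegral_ofReal hint (Filter.Eventually.of_forall fun w =>
      mul_nonneg (gaussDen_pos ht _).le (gaussDen_pos hu _).le)]
  exact lintegral_congr fun w => ENNReal.ofReal_mul (gaussDen_pos ht _).le

/-- Chapman–Kolmogorov in `ℝ≥0∞` form. -/
lemma heatP_semigroup (hfm : Measurable f) (hf0 : ∀ x, 0 ≤ f x) (hfi : Integrable f)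
    (ht : 0 < t) (hu : 0 < u) (x : ℝ) :
    ENNReal.ofReal (heatP f (t + u) x)
      = ∫⁻ w : ℝ, ENNReal.ofReal (gaussDen u w)
          * ∫⁻ y : ℝ, ENNReal.ofReal (f y) * ENNReal.ofReal (gaussDen t ((x - w) - y)) := by
  set F : ℝ → ℝ≥0∞ := fun y => ENNReal.ofReal (f y) with hF
  set Φt : ℝ → ℝ≥0∞ := fun z => ENNReal.ofReal (gaussDen t z) with hΦt
  set Φu : ℝ → ℝ≥0∞ := fun z => ENNReal.ofReal (gaussDen u z) with hΦu
  have hFm : Measurable F := ENNReal.measurable_ofReal.comp hfm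
  have hΦtm : Measurable Φt := ENNReal.measurable_ofReal.comp (gaussDen_measurable t)
  have hΦum : Measurable Φu := ENNReal.measurable_ofReal.comp (gaussDen_measurable u)
  rw [heatP_lintegral hfm hf0 hfi (by linarith) x]
  have e1 : ∀ y : ℝ, F y * ENNReal.ofReal (gaussDen (t + u) (x - y))
      = ∫⁻ w : ℝ, F y * (Φt (x - y - w) * Φu w) := by
    intro y
    rw [ofReal_gaussDen_conv ht hu (x - y)]
    have hm : Measurable fun w : ℝ => Φt (x - y - w) * Φu w := by
      exact (hΦtm.comp (measurable_const.sub measurable_id)).mul hΦum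
    rw [lintegral_const_mul _ hm]
  calc ∫⁻ y : ℝ, F y * ENNReal.ofReal (gaussDen (t + u) (x - y))
      = ∫⁻ y : ℝ, ∫⁻ w : ℝ, F y * (Φt (x - y - w) * Φu w) := lintegral_congr e1
    _ = ∫⁻ w : ℝ, ∫⁻ y : ℝ, F y * (Φt (x - y - w) * Φu w) := by
        refine lintegral_lintegral_swap ?_
        apply Measurable.aemeasurable
        exact (hFm.comp measurable_fst).mul
          (((hΦtm.comp ((measurable_const.sub measurable_fst).sub measurable_snd)).mul
            (hΦum.comp measurable_snd)))
    _ = ∫⁻ w : ℝ, Φu w * ∫⁻ y : ℝ, F y * Φt ((x - w) - y) := by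
        refine lintegral_congr fun w => ?_
        have e2 : ∀ y : ℝ, F y * (Φt (x - y - w) * Φu w) = Φu w * (F y * Φt ((x - w) - y)) := by
          intro y
          rw [show x - y - w = (x - w) - y by ring]
          ring
        simp_rw [e2]
        have hm : Measurable fun y : ℝ => F y * Φt ((x - w) - y) := by
          exact hFm.mul (hΦtm.comp (measurable_const.sub measurable_id))
        rw [lintegral_const_mul _ hm]

end semigroup

/-- Among all densities along the heat flow at time t, the Gaussian of variance t
minimizes the Rényi entropy: h_α(p(·,t)) ≥ h_α(G_t) = (1/2)log(2πt) + log α/(2(α-1));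
equivalently ∫ p^α ≤ ∫ φ_t^α for α > 1 and ∫ p^α ≥ ∫ φ_t^α for 0 < α < 1. -/
theorem renyi_entropy_gaussian_lower_bound
    (f : ℝ → ℝ) (hfm : Measurable f) (hf0 : ∀ x, 0 ≤ f x)
    (hf1 : (∫ x : ℝ, f x) = 1)
    (α : ℝ) (hα : 0 < α) (hα1 : α ≠ 1)
    (t : ℝ) (ht : 0 < t) (htα : ltTalpha f α t) :
    1 / 2 * Real.log (2 * Real.pi * t) + 1 / (2 * (α - 1)) * Real.log α
        ≤ renyiEnt f α t
    ∧ (1 < α →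
        (∫ x : ℝ, heatP f t x ^ α) ≤ ∫ x : ℝ, gaussDen t x ^ α)
    ∧ (α < 1 →
        (∫ x : ℝ, gaussDen t x ^ α) ≤ ∫ x : ℝ, heatP f t x ^ α) := by
  have hfi : Integrable f := by
    by_contra h
    rw [integral_undef h] at hf1
    norm_num at hf1
  set c : ℝ := Real.sqrt (2 * Real.pi * t) with hc
  have hcpos : 0 < c := Real.sqrt_pos.2 (by positivity)
  set F : ℝ → ℝ≥0∞ := fun y => ENNReal.ofReal (f y) with hF
  set Φ : ℝ → ℝ≥0∞ := fun z => ENNReal.ofReal (gaussDen t z) with hΦ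
  have hFm : Measurable F := ENNReal.measurable_ofReal.comp hfm
  have hΦm : Measurable Φ := ENNReal.measurable_ofReal.comp (gaussDen_measurable t)
  have hF1 : ∫⁻ y, F y = 1 := lintegral_ofReal_f hf0 hfi hf1
  have hΦ1 : ∫⁻ z, Φ z = 1 := lintegral_ofReal_gaussDen ht
  have hbridge : ∀ x, ENNReal.ofReal (heatP f t x) = ∫⁻ y, F y * Φ (x - y) :=
    heatP_lintegral hfm hf0 hfi ht
  have hppos : ∀ x, 0 < heatP f t x := heatP_pos hfm hf0 hfi hf1 ht
  have hpm : Measurable (heatP f t) := heatP_measurable hfm t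
  set M : ℝ≥0∞ := ∫⁻ x, (∫⁻ y, F y * Φ (x - y)) ^ α with hM
  set A : ℝ≥0∞ := ∫⁻ z, Φ z ^ α with hA
  have hGint : Integrable (fun x : ℝ => gaussDen t x ^ α) := integrable_gaussDen_rpow ht hα
  have hGval : (∫ x : ℝ, gaussDen t x ^ α) = c ^ (1 - α) / Real.sqrt α := by
    rw [hc]; exact integral_gaussDen_rpow ht hα
  have hGpos : 0 < ∫ x : ℝ, gaussDen t x ^ α := by
    rw [hGval]; positivity
  have hAeq : A = ENNReal.ofReal (∫ x : ℝ, gaussDen t x ^ α) := by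
    rw [ofReal_integral_eq_lintegral_ofReal hGint (Filter.Eventually.of_forall fun x =>
      Real.rpow_nonneg (gaussDen_pos ht x).le α)]
    exact lintegral_congr fun x =>
      ENNReal.ofReal_rpow_of_nonneg (gaussDen_pos ht x).le hα.le
  have hAne : A ≠ ∞ := by rw [hAeq]; exact ENNReal.ofReal_ne_top
  have hAtr : A.toReal = ∫ x : ℝ, gaussDen t x ^ α := by
    rw [hAeq, ENNReal.toReal_ofReal hGpos.le]
  have hlpa : ∀ x, ENNReal.ofReal (heatP f t x ^ α) = (∫⁻ y, F y * Φ (x - y)) ^ α := by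
    intro x
    rw [← ENNReal.ofReal_rpow_of_nonneg (hppos x).le hα.le, hbridge x]
  have hpam : Measurable fun x : ℝ => heatP f t x ^ α := by fun_prop
  have hpa_nonneg : ∀ x : ℝ, 0 ≤ heatP f t x ^ α := fun x =>
    Real.rpow_nonneg (hppos x).le α
  -- from `M ≠ ∞` we get integrability and the value of the Bochner integral
  have hInt_of_ne : M ≠ ∞ → Integrable (fun x : ℝ => heatP f t x ^ α)
      ∧ (∫ x : ℝ, heatP f t x ^ α) = M.toReal := by
    intro hMne
    have hfin : HasFiniteIntegral (fun x : ℝ => heatP f t x ^ α) := by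
      rw [hasFiniteIntegral_iff_ofReal (Filter.Eventually.of_forall hpa_nonneg)]
      rw [lintegral_congr hlpa, ← hM]
      exact hMne.lt_top
    have hint : Integrable (fun x : ℝ => heatP f t x ^ α) :=
      ⟨hpam.aestronglyMeasurable, hfin⟩
    refine ⟨hint, ?_⟩
    rw [integral_eq_lintegral_of_nonneg_ae (Filter.Eventually.of_forall hpa_nonneg)
      hpam.aestronglyMeasurable, lintegral_congr hlpa, ← hM]
  -- the case 1 < α
  have keyGT : 1 < α → (∫ x : ℝ, heatP f t x ^ α) ≤ ∫ x : ℝ, gaussDen t x ^ α := by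
    intro hα'
    have hub : ∀ x, (∫⁻ y, F y * Φ (x - y)) ≤ ENNReal.ofReal c⁻¹ := fun x => by
      rw [← hbridge x]
      exact ENNReal.ofReal_le_ofReal (heatP_le hf0 hfi hf1 ht x)
    have hMne : M ≠ ∞ := by
      have hbound : ∀ x, (∫⁻ y, F y * Φ (x - y)) ^ α
          ≤ ENNReal.ofReal c⁻¹ ^ (α - 1) * (∫⁻ y, F y * Φ (x - y)) := by
        intro x
        rw [rpow_split (by linarith) _]
        calc (∫⁻ y, F y * Φ (x - y)) * (∫⁻ y, F y * Φ (x - y)) ^ (α - 1)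
            ≤ (∫⁻ y, F y * Φ (x - y)) * ENNReal.ofReal c⁻¹ ^ (α - 1) :=
              mul_le_mul_right (ENNReal.rpow_le_rpow (hub x) (by linarith)) _
          _ = _ := mul_comm _ _
      have : M ≤ ENNReal.ofReal c⁻¹ ^ (α - 1) * 1 := by
        calc M ≤ ∫⁻ x, ENNReal.ofReal c⁻¹ ^ (α - 1) * (∫⁻ y, F y * Φ (x - y)) :=
              lintegral_mono hbound
          _ = ENNReal.ofReal c⁻¹ ^ (α - 1) * 1 := by
              rw [lintegral_const_mul _ (convP_meas hFm hΦm), conv_mass hFm hΦm hF1 hΦ1]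
      refine ne_top_of_le_ne_top ?_ this
      rw [mul_one]
      exact ENNReal.rpow_ne_top_of_nonneg (by linarith) ENNReal.ofReal_ne_top
    obtain ⟨hint, hval⟩ := hInt_of_ne hMne
    have hMA : M ≤ A := conv_rpow_upper hα' hFm hΦm hF1 hMne
    rw [hval, ← hAtr]
    exact ENNReal.toReal_mono hAne hMA
  -- the case α < 1
  have keyLT : α < 1 → (∫ x : ℝ, gaussDen t x ^ α) ≤ (∫ x : ℝ, heatP f t x ^ α)
      ∧ Integrable (fun x : ℝ => heatP f t x ^ α) := by
    intro hα'
    obtain ⟨s, hts, hs, hfin⟩ := htα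
    simp only [renyiFinite, if_neg hα1] at hfin
    obtain ⟨hIs, hIspos⟩ := hfin
    have hu0 : 0 < s - t := by linarith
    set Φu : ℝ → ℝ≥0∞ := fun z => ENNReal.ofReal (gaussDen (s - t) z) with hΦu
    have hΦum : Measurable Φu := ENNReal.measurable_ofReal.comp (gaussDen_measurable (s - t))
    have hΦu1 : ∫⁻ z, Φu z = 1 := lintegral_ofReal_gaussDen hu0
    have hPtm : Measurable fun x : ℝ => ∫⁻ y, F y * Φ (x - y) := convP_meas hFm hΦm
    have hsg : ∀ x, ENNReal.ofReal (heatP f s x)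
        = ∫⁻ w, Φu w * ∫⁻ y, F y * Φ ((x - w) - y) := by
      intro x
      have h := heatP_semigroup hfm hf0 hfi ht hu0 x
      rw [show t + (s - t) = s by ring] at h
      exact h
    have h1 : A ≤ M := conv_rpow_lower hα hα' hFm hΦm hF1
    have h2 : M ≤ ENNReal.ofReal (∫ x : ℝ, heatP f s x ^ α) := by
      have hstep := conv_rpow_lower (F := Φu) (Φ := fun x => ∫⁻ y, F y * Φ (x - y))
        hα hα' hΦum hPtm hΦu1
      refine le_trans hstep (le_of_eq ?_)
      rw [ofReal_integral_eq_lintegral_ofReal hIs (Filter.Eventually.of_forall fun x =>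
        Real.rpow_nonneg (heatP_pos hfm hf0 hfi hf1 hs x).le α)]
      refine lintegral_congr fun x => ?_
      rw [← ENNReal.ofReal_rpow_of_nonneg (heatP_pos hfm hf0 hfi hf1 hs x).le hα.le, hsg x]
    have hMne : M ≠ ∞ := ne_top_of_le_ne_top ENNReal.ofReal_ne_top h2
    obtain ⟨hint, hval⟩ := hInt_of_ne hMne
    refine ⟨?_, hint⟩
    rw [hval, ← hAtr]
    exact ENNReal.toReal_mono hMne h1
  refine ⟨?_, keyGT, fun h => (keyLT h).1⟩
  -- the entropy inequality
  rw [renyiEnt, if_neg hα1]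
  have h1α : 1 - α ≠ 0 := fun h => hα1 (by linarith)
  have hsqα : (0:ℝ) < Real.sqrt α := Real.sqrt_pos.2 hα
  have hlogIg : (1 - α)⁻¹ * Real.log (∫ x : ℝ, gaussDen t x ^ α)
      = 1 / 2 * Real.log (2 * Real.pi * t) + 1 / (2 * (α - 1)) * Real.log α := by
    have h2 : α - 1 ≠ 0 := sub_ne_zero.2 hα1
    rw [hGval, Real.log_div (by positivity) hsqα.ne', Real.log_rpow hcpos,
      hc, Real.log_sqrt (by positivity), Real.log_sqrt hα.le]
    field_simp [h1α, h2]
    ring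
  rcases lt_or_gt_of_ne hα1 with hα' | hα'
  · -- α < 1 : (1-α)⁻¹ > 0 and ∫ gauss^α ≤ ∫ p^α
    obtain ⟨hle, hint⟩ := keyLT hα'
    rw [← hlogIg]
    have hlog : Real.log (∫ x : ℝ, gaussDen t x ^ α) ≤ Real.log (∫ x : ℝ, heatP f t x ^ α) :=
      Real.log_le_log hGpos hle
    have hpos : (0:ℝ) ≤ (1 - α)⁻¹ := by
      have : (0:ℝ) < 1 - α := by linarith
      positivity
    exact mul_le_mul_of_nonneg_left hlog hpos
  · -- 1 < α : (1-α)⁻¹ < 0 and ∫ p^α ≤ ∫ gauss^α, with ∫ p^α > 0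
    have hle := keyGT hα'
    -- positivity of ∫ p^α : support is everything
    have hMne : M ≠ ∞ := by
      -- as in keyGT; reprove quickly via A and conv_rpow_upper? need M ≠ ∞ first; redo bound
      have hub : ∀ x, (∫⁻ y, F y * Φ (x - y)) ≤ ENNReal.ofReal c⁻¹ := fun x => by
        rw [← hbridge x]
        exact ENNReal.ofReal_le_ofReal (heatP_le hf0 hfi hf1 ht x)
      have hbound : ∀ x, (∫⁻ y, F y * Φ (x - y)) ^ α
          ≤ ENNReal.ofReal c⁻¹ ^ (α - 1) * (∫⁻ y, F y * Φ (x - y)) := by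
        intro x
        rw [rpow_split (by linarith) _]
        calc (∫⁻ y, F y * Φ (x - y)) * (∫⁻ y, F y * Φ (x - y)) ^ (α - 1)
            ≤ (∫⁻ y, F y * Φ (x - y)) * ENNReal.ofReal c⁻¹ ^ (α - 1) :=
              mul_le_mul_right (ENNReal.rpow_le_rpow (hub x) (by linarith)) _
          _ = _ := mul_comm _ _
      have : M ≤ ENNReal.ofReal c⁻¹ ^ (α - 1) * 1 := by
        calc M ≤ ∫⁻ x, ENNReal.ofReal c⁻¹ ^ (α - 1) * (∫⁻ y, F y * Φ (x - y)) :=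
              lintegral_mono hbound
          _ = ENNReal.ofReal c⁻¹ ^ (α - 1) * 1 := by
              rw [lintegral_const_mul _ (convP_meas hFm hΦm), conv_mass hFm hΦm hF1 hΦ1]
      refine ne_top_of_le_ne_top ?_ this
      rw [mul_one]
      exact ENNReal.rpow_ne_top_of_nonneg (by linarith) ENNReal.ofReal_ne_top
    obtain ⟨hint, hval⟩ := hInt_of_ne hMne
    have hppow_pos : ∀ x, 0 < heatP f t x ^ α := fun x => Real.rpow_pos_of_pos (hppos x) α
    have hIppos : 0 < ∫ x : ℝ, heatP f t x ^ α := by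
      rw [integral_pos_iff_support_of_nonneg hpa_nonneg hint]
      have : Function.support (fun x : ℝ => heatP f t x ^ α) = Set.univ :=
        Set.eq_univ_of_forall fun x => (hppow_pos x).ne'
      rw [this]
      simp
    rw [← hlogIg]
    have hlog : Real.log (∫ x : ℝ, heatP f t x ^ α) ≤ Real.log (∫ x : ℝ, gaussDen t x ^ α) :=
      Real.log_le_log hIppos hle
    have hneg : (1 - α)⁻¹ ≤ 0 := by
      apply inv_nonpos.2
      linarith
    exact mul_le_mul_of_nonpos_left hlog hneg
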